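/- arXiv:1506.03596 — 3 statements merged into one kernel-verified Lean document; each statement's English description precedes it below -/
import Mathlib

section
/- For every natural number n ≥ 1, the following identity holds in ℤ: Σ_{i=2}^{n} Σ_{j=i}^{n} C(i−1+n−j, n−j) · ( C(n−i+j, j) − C(n−i+j, j+1) ) = −(n−1) − C(2n, n) + 2·C(2n, n+1). -/
open Finset

/-- Vandermonde convolution in the form `∑_{b≤s} C(s,b) C(M,N-b) = C(s+M,N)`. -/
lemma vander_full (s M N : ℕ) (h : s ≤ N) :
    ∑ b ∈ range (s + 1), s.choose b * M.choose (N - b) = (s + M).choose N := by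
  rw [Nat.add_choose_eq, Finset.Nat.sum_antidiagonal_eq_sum_range_succ_mk]
  refine Finset.sum_subset ?_ ?_
  · intro x hx
    simp only [mem_range] at hx ⊢
    omega
  · intro x _ hx
    simp only [mem_range, not_lt] at hx
    rw [Nat.choose_eq_zero_of_lt (by omega), zero_mul]

/-- Partial Vandermonde: drop the top term. -/
lemma vander_partial (s M N : ℕ) (h : s ≤ N) :
    ∑ b ∈ range s, (s.choose b : ℤ) * M.choose (N - b) =
      ((s + M).choose N : ℤ) - M.choose (N - s) := by
  have h1 := vander_full s M N h
  have h2 : ∑ b ∈ range (s + 1), (s.choose b : ℤ) * M.choose (N - b) =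
      ((s + M).choose N : ℤ) := by exact_mod_cast congrArg (Nat.cast : ℕ → ℤ) h1
  rw [Finset.sum_range_succ, Nat.choose_self] at h2
  push_cast at h2
  linarith

/-- Hockey stick over `ℤ`. -/
lemma sum_Icc_choose_int (k m : ℕ) :
    ∑ i ∈ Icc k m, (i.choose k : ℤ) = (m + 1).choose (k + 1) := by
  exact_mod_cast congrArg (Nat.cast : ℕ → ℤ) (Nat.sum_Icc_choose m k)

lemma sum_Ioc_choose_int (k m : ℕ) (h : k ≤ m) :
    ∑ i ∈ Icc (k + 1) m, (i.choose k : ℤ) = ((m + 1).choose (k + 1) : ℤ) - 1 := by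
  have : Icc (k + 1) m = (Icc k m).erase k := by
    rw [Finset.Icc_erase_left, Finset.Icc_add_one_left_eq_Ioc]
  rw [this, Finset.sum_erase_eq_sub (by simp [h]), sum_Icc_choose_int, Nat.choose_self]
  norm_num

lemma sum_Ioc2_choose_int (k m : ℕ) (h : k + 1 ≤ m) :
    ∑ i ∈ Icc (k + 2) m, (i.choose k : ℤ) =
      ((m + 1).choose (k + 1) : ℤ) - 1 - (k + 1) := by
  have : Icc (k + 2) m = (Icc (k + 1) m).erase (k + 1) := by
    rw [Finset.Icc_erase_left]; exact Finset.Icc_add_one_left_eq_Ioc (k + 1) m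
  rw [this, Finset.sum_erase_eq_sub (by simp [h]), sum_Ioc_choose_int k m (by omega),
    Nat.choose_succ_self_right]
  push_cast
  ring

/-- Reindex `s ↦ 2n-1-s`. -/
lemma reindex_sum (n : ℕ) (hn : 1 ≤ n) (f : ℕ → ℤ) :
    ∑ s ∈ Icc 1 (n - 1), f (2 * n - 1 - s) = ∑ i ∈ Icc n (2 * n - 2), f i := by
  refine Finset.sum_nbij' (fun s => 2 * n - 1 - s) (fun i => 2 * n - 1 - i) ?_ ?_ ?_ ?_ ?_
  · intro a ha; simp only [mem_Icc] at ha ⊢; omega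
  · intro a ha; simp only [mem_Icc] at ha ⊢; omega
  · intro a ha; simp only [mem_Icc] at ha; omega
  · intro a ha; simp only [mem_Icc] at ha; omega
  · intro a _; rfl

/-- The paper's Lemma (lem4, formula (34)): evaluation of the sum `S₂`. -/
theorem lemma_S2_sum (n : ℕ) (hn : 1 ≤ n) :
    ∑ i ∈ Finset.Icc 2 n, ∑ j ∈ Finset.Icc i n,
        (Nat.choose (i - 1 + n - j) (n - j) : ℤ) *
          ((Nat.choose (n - i + j) j : ℤ) - (Nat.choose (n - i + j) (j + 1) : ℤ)) =
      -((n : ℤ) - 1) - (Nat.choose (2 * n) n : ℤ) + 2 * (Nat.choose (2 * n) (n + 1) : ℤ) := by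
  -- dispose of n = 1
  rcases eq_or_lt_of_le hn with h1 | h2
  · subst h1
    norm_num [show Finset.Icc 2 1 = (∅ : Finset ℕ) from rfl]
  have hn2 : 2 ≤ n := h2
  -- Step 1: reindex the double sum via (i,j) ↦ (s,b) = (i-1+n-j, n-j)
  have key : ∑ i ∈ Finset.Icc 2 n, ∑ j ∈ Finset.Icc i n,
        (Nat.choose (i - 1 + n - j) (n - j) : ℤ) *
          ((Nat.choose (n - i + j) j : ℤ) - (Nat.choose (n - i + j) (j + 1) : ℤ)) =
      ∑ s ∈ Icc 1 (n - 1), ∑ b ∈ range s,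
        (s.choose b : ℤ) *
          (((2 * n - 1 - s).choose (n - b) : ℤ) - ((2 * n - 1 - s).choose (n + 1 - b) : ℤ)) := by
    rw [Finset.sum_sigma', Finset.sum_sigma']
    refine Finset.sum_nbij' (fun p => ⟨p.1 - 1 + n - p.2, n - p.2⟩)
      (fun p => ⟨p.1 - p.2 + 1, n - p.2⟩) ?_ ?_ ?_ ?_ ?_
    · rintro ⟨i, j⟩ hp
      simp only [mem_sigma, mem_Icc, mem_range] at hp ⊢
      omega
    · rintro ⟨s, b⟩ hp
      simp only [mem_sigma, mem_Icc, mem_range] at hp ⊢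
      omega
    · rintro ⟨i, j⟩ hp
      simp only [mem_sigma, mem_Icc] at hp
      simp only [Sigma.mk.inj_iff]
      constructor
      · omega
      · exact heq_of_eq (by omega)
    · rintro ⟨s, b⟩ hp
      simp only [mem_sigma, mem_Icc, mem_range] at hp
      simp only [Sigma.mk.inj_iff]
      constructor
      · omega
      · exact heq_of_eq (by omega)
    · rintro ⟨i, j⟩ hp
      simp only [mem_sigma, mem_Icc] at hp
      have e1 : i - 1 + n - j - (n - j) = i - 1 + n - j - (n - j) := rfl
      have h1 : 2 * n - 1 - (i - 1 + n - j) = n - i + j := by omega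
      have h2 : n - (n - j) = j := by omega
      have h3 : n + 1 - (n - j) = j + 1 := by omega
      rw [h1, h2, h3]
  rw [key]
  -- Step 2: evaluate the inner sum with partial Vandermonde
  have inner : ∀ s ∈ Icc 1 (n - 1),
      ∑ b ∈ range s, (s.choose b : ℤ) *
          (((2 * n - 1 - s).choose (n - b) : ℤ) - ((2 * n - 1 - s).choose (n + 1 - b) : ℤ)) =
        (((2 * n - 1).choose n : ℤ) - ((2 * n - 1).choose (n + 1) : ℤ))
          - ((2 * n - 1 - s).choose (n - s) : ℤ) + ((2 * n - 1 - s).choose (n + 1 - s) : ℤ) := by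
    intro s hs
    simp only [mem_Icc] at hs
    have hsum : ∑ b ∈ range s, (s.choose b : ℤ) *
          (((2 * n - 1 - s).choose (n - b) : ℤ) - ((2 * n - 1 - s).choose (n + 1 - b) : ℤ)) =
        (∑ b ∈ range s, (s.choose b : ℤ) * ((2 * n - 1 - s).choose (n - b) : ℤ))
          - ∑ b ∈ range s, (s.choose b : ℤ) * ((2 * n - 1 - s).choose (n + 1 - b) : ℤ) := by
      rw [← Finset.sum_sub_distrib]
      exact Finset.sum_congr rfl fun b _ => by ring
    rw [hsum, vander_partial s (2 * n - 1 - s) n (by omega),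
      vander_partial s (2 * n - 1 - s) (n + 1) (by omega),
      show s + (2 * n - 1 - s) = 2 * n - 1 by omega]
    ring
  rw [Finset.sum_congr rfl inner]
  -- Step 3: split and evaluate the three sums over s
  have hsplit : ∑ s ∈ Icc 1 (n - 1),
      ((((2 * n - 1).choose n : ℤ) - ((2 * n - 1).choose (n + 1) : ℤ))
        - ((2 * n - 1 - s).choose (n - s) : ℤ) + ((2 * n - 1 - s).choose (n + 1 - s) : ℤ)) =
      (↑(n - 1) : ℤ) * (((2 * n - 1).choose n : ℤ) - ((2 * n - 1).choose (n + 1) : ℤ))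
        - (∑ s ∈ Icc 1 (n - 1), ((2 * n - 1 - s).choose (n - s) : ℤ))
        + ∑ s ∈ Icc 1 (n - 1), ((2 * n - 1 - s).choose (n + 1 - s) : ℤ) := by
    rw [Finset.sum_add_distrib, Finset.sum_sub_distrib, Finset.sum_const, Nat.card_Icc]
    simp only [nsmul_eq_mul]
    norm_cast
  rw [hsplit]
  -- the two tail sums become hockey sticks
  have t1 : ∑ s ∈ Icc 1 (n - 1), ((2 * n - 1 - s).choose (n - s) : ℤ) =
      ((2 * n - 1).choose n : ℤ) - 1 := by
    have e : ∀ s ∈ Icc 1 (n - 1),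
        ((2 * n - 1 - s).choose (n - s) : ℤ) = ((2 * n - 1 - s).choose (n - 1) : ℤ) := by
      intro s hs
      simp only [mem_Icc] at hs
      rw [← Nat.choose_symm (by omega), show 2 * n - 1 - s - (n - s) = n - 1 by omega]
    rw [Finset.sum_congr rfl e, reindex_sum n hn (fun i => ((i.choose (n - 1) : ℕ) : ℤ)),
      show Icc n (2 * n - 2) = Icc ((n - 1) + 1) (2 * n - 2) by congr 1; omega]
    rw [sum_Ioc_choose_int (n - 1) (2 * n - 2) (by omega)]
    congr 3 <;> omega
  have t2 : ∑ s ∈ Icc 1 (n - 1), ((2 * n - 1 - s).choose (n + 1 - s) : ℤ) =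
      ((2 * n - 1).choose n : ℤ) - 1 - ((n : ℤ) - 1) := by
    have e : ∀ s ∈ Icc 1 (n - 1),
        ((2 * n - 1 - s).choose (n + 1 - s) : ℤ) = ((2 * n - 1 - s).choose (n - 2) : ℤ) := by
      intro s hs
      simp only [mem_Icc] at hs
      rw [← Nat.choose_symm (by omega), show 2 * n - 1 - s - (n + 1 - s) = n - 2 by omega]
    rw [Finset.sum_congr rfl e, reindex_sum n hn (fun i => ((i.choose (n - 2) : ℕ) : ℤ))]
    have h4 : n = (n - 2) + 2 := by omega
    rw [show (Icc n (2 * n - 2)) = Icc ((n - 2) + 2) (2 * n - 2) by rw [← h4]]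
    rw [sum_Ioc2_choose_int (n - 2) (2 * n - 2) (by omega)]
    have hc : (2 * n - 2 + 1).choose (n - 2 + 1) = (2 * n - 1).choose (n - 1) := by
      congr 1 <;> omega
    have hsym : (2 * n - 1).choose (n - 1) = (2 * n - 1).choose n := by
      rw [← Nat.choose_symm (show n ≤ 2 * n - 1 by omega), show 2 * n - 1 - n = n - 1 by omega]
    rw [hc, hsym]
    push_cast [show ((n - 2 : ℕ) : ℤ) = (n : ℤ) - 2 by omega]
    ring
  rw [t1, t2]
  -- Step 4: final algebra using Pascal and the absorption identity
  have pascal1 : ((2 * n).choose n : ℤ) =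
      ((2 * n - 1).choose (n - 1) : ℤ) + ((2 * n - 1).choose n : ℤ) := by
    obtain ⟨m, hm⟩ : ∃ m, 2 * n = m + 1 := ⟨2 * n - 1, by omega⟩
    obtain ⟨k, hk⟩ : ∃ k, n = k + 1 := ⟨n - 1, by omega⟩
    have : (2 * n).choose n = (2 * n - 1).choose (n - 1) + (2 * n - 1).choose n := by
      rw [hm, hk, Nat.choose_succ_succ, show m + 1 - 1 = m by omega,
        show k + 1 - 1 = k by omega]
    exact_mod_cast congrArg (Nat.cast : ℕ → ℤ) this
  have pascal2 : ((2 * n).choose (n + 1) : ℤ) =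
      ((2 * n - 1).choose n : ℤ) + ((2 * n - 1).choose (n + 1) : ℤ) := by
    obtain ⟨m, hm⟩ : ∃ m, 2 * n = m + 1 := ⟨2 * n - 1, by omega⟩
    have : (2 * n).choose (n + 1) = (2 * n - 1).choose n + (2 * n - 1).choose (n + 1) := by
      rw [hm, Nat.choose_succ_succ, show m + 1 - 1 = m by omega]
    exact_mod_cast congrArg (Nat.cast : ℕ → ℤ) this
  have hsym : ((2 * n - 1).choose (n - 1) : ℤ) = ((2 * n - 1).choose n : ℤ) := by
    have : (2 * n - 1).choose (n - 1) = (2 * n - 1).choose n := by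
      rw [← Nat.choose_symm (show n ≤ 2 * n - 1 by omega), show 2 * n - 1 - n = n - 1 by omega]
    exact_mod_cast congrArg (Nat.cast : ℕ → ℤ) this
  have absorb : ((2 * n - 1).choose (n + 1) : ℤ) * ((n : ℤ) + 1) =
      ((2 * n - 1).choose n : ℤ) * ((n : ℤ) - 1) := by
    have h0 := Nat.choose_succ_right_eq (2 * n - 1) n
    have h5 : 2 * n - 1 - n = n - 1 := by omega
    rw [h5] at h0
    have := congrArg (Nat.cast : ℕ → ℤ) h0
    push_cast at this
    rw [this, show ((n - 1 : ℕ) : ℤ) = (n : ℤ) - 1 by omega]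
  have hcast : ((n - 1 : ℕ) : ℤ) = (n : ℤ) - 1 := by omega
  rw [hcast, pascal1, pascal2, hsym]
  nlinarith [absorb]
end

section
/- For every natural number n ≥ 3, the following identity holds in ℚ: Σ_{i=2}^{n} Σ_{j=i}^{n} ( Σ_{s=0}^{j−i+1} C(i−1+n−j, i−1)·C(i−1+n−j, s+i)·C(2j−2i, j−i−s+1) − Σ_{s=0}^{j−i−3} C(i−1+n−j, i−1)·C(i−1+n−j, s+i)·C(2j−2i, j−i−s−3) ) = 2^{2n−1} + (n−1) − (2/n)·C(2n, n−2) − C(2n, n+1) − C(2n+1, n) + C(2n, n), where inner sums over s are empty when their upper bound is negative. -/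
open Finset

lemma sum2 (q : ℕ) : ∀ M : ℕ, ∑ j ∈ range M, Nat.choose (q+1) j
    = ∑ j ∈ range M, Nat.choose q j + ∑ j ∈ range (M-1), Nat.choose q j := by
  intro M
  induction M with
  | zero => simp
  | succ M ih =>
    rcases M with _ | M
    · simp
    · rw [sum_range_succ, ih, sum_range_succ (n := M+1)]
      have : (M+1+1) - 1 = M + 1 := rfl
      rw [this, sum_range_succ (n := M)]
      simp [Nat.choose_succ_succ]
      ring

lemma sum2two (q M : ℕ) : ∑ j ∈ range M, Nat.choose (q+2) j
    = ∑ j ∈ range M, Nat.choose q j + 2 * ∑ j ∈ range (M-1), Nat.choose q j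
      + ∑ j ∈ range (M-2), Nat.choose q j := by
  have h1 := sum2 (q+1) M
  rw [h1, sum2 q M, sum2 q (M-1)]
  have : M - 1 - 1 = M - 2 := by omega
  rw [this]; ring

lemma pascal2 (m j : ℕ) : Nat.choose (m+2) (j+2)
    = Nat.choose m j + 2 * Nat.choose m (j+1) + Nat.choose m (j+2) := by
  rw [Nat.choose_succ_succ (m+1) (j+1), Nat.choose_succ_succ m j, Nat.choose_succ_succ m (j+1)]
  ring

lemma pascal0 (d : ℕ) : Nat.choose (2*d+2) (d+1)
    = 2 * Nat.choose (2*d) d + 2 * Nat.choose (2*d) (d+1) := by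
  rw [Nat.choose_succ_succ (2*d+1) d]
  have hs : Nat.choose (2*d+1) d = Nat.choose (2*d+1) (d+1) := by
    have := Nat.choose_symm (n := 2*d+1) (k := d+1) (by omega)
    have h2 : 2*d+1 - (d+1) = d := by omega
    rw [h2] at this
    omega
  rw [hs, Nat.choose_succ_succ (2*d) d]
  ring

/-- Key convolution identity. -/
lemma conv_eq : ∀ N k b : ℕ, ∑ d ∈ range (N+1),
      Nat.choose (2*(N-d)) (N-d+k) * Nat.choose (2*d) (d+b)
    = ∑ j ∈ range (N+1-(k+b)), Nat.choose (2*N+1) j := by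
  intro N
  induction N with
  | zero =>
    intro k b
    rcases k with _ | k <;> rcases b with _ | b <;>
      simp [Nat.choose_eq_zero_of_lt, Nat.sub_eq_zero_of_le, Nat.le_add_right] <;>
      · rw [Nat.sub_eq_zero_of_le (by omega)]; simp
  | succ N ih =>
    intro k b
    rw [sum_range_succ' (fun d => Nat.choose (2*(N+1-d)) (N+1-d+k) * Nat.choose (2*d) (d+b)) (N+1)]
    have hcongr : ∀ d ∈ range (N+1),
        Nat.choose (2*(N+1-(d+1))) (N+1-(d+1)+k) * Nat.choose (2*(d+1)) (d+1+b)
        = Nat.choose (2*(N-d)) (N-d+k) * Nat.choose (2*d+2) (d+b+1) := by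
      intro d hd
      have h1 : N+1-(d+1) = N - d := by omega
      have h2 : 2*(d+1) = 2*d+2 := by ring
      have h3 : d+1+b = d+b+1 := by ring
      rw [h1, h2, h3]
    rw [sum_congr rfl hcongr]
    have hd0 : Nat.choose (2*(N+1-0)) (N+1-0+k) * Nat.choose (2*0) (0+b)
        = Nat.choose (2*(N+1)) (N+1+k) * Nat.choose 0 b := by norm_num
    rw [hd0]
    rcases b with _ | b
    · -- b = 0 case
      have hsum : ∀ d ∈ range (N+1),
          Nat.choose (2*(N-d)) (N-d+k) * Nat.choose (2*d+2) (d+0+1)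
          = 2 * (Nat.choose (2*(N-d)) (N-d+k) * Nat.choose (2*d) (d+0))
            + 2 * (Nat.choose (2*(N-d)) (N-d+k) * Nat.choose (2*d) (d+1)) := by
        intro d _
        show Nat.choose (2*(N-d)) (N-d+k) * Nat.choose (2*d+2) (d+1) = _
        rw [pascal0 d]; ring
      rw [sum_congr rfl hsum, sum_add_distrib, ← mul_sum, ← mul_sum, ih k 0, ih k 1]
      simp only [Nat.choose_zero_right, mul_one]
      have h2n : 2*(N+1)+1 = (2*N+1)+2 := by ring
      rw [h2n, sum2two (2*N+1) (N+1+1-(k+0))]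
      have e1 : N+1+1-(k+0)-1 = N+1-(k+0) := by omega
      have e2 : N+1+1-(k+0)-2 = N+1-(k+1) := by omega
      rw [e1, e2]
      have key : ∑ j ∈ range (N+1+1-(k+0)), Nat.choose (2*N+1) j
          = ∑ j ∈ range (N+1-(k+1)), Nat.choose (2*N+1) j + Nat.choose (2*(N+1)) (N+1+k) := by
        rcases Nat.lt_or_ge N k with hk | hk
        · have e3 : N+1-(k+1) = 0 := by omega
          rw [e3]
          rcases Nat.eq_or_lt_of_le hk with hk1 | hk2
          · -- k = N+1
            have e4 : N+1+1-(k+0) = 1 := by omega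
            have e5 : N+1+k = 2*(N+1) := by omega
            rw [e4, e5, Nat.choose_self]
            simp
          · have e4 : N+1+1-(k+0) = 0 := by omega
            rw [e4, Nat.choose_eq_zero_of_lt (by omega)]
            simp
        · have hM : N+1+1-(k+0) = (N+1-(k+1)) + 2 := by omega
          rw [hM, sum_range_succ, sum_range_succ]
          have f1 : N+1-(k+1) = N-k := by omega
          rw [f1]
          have f2 : N-k+1 = N+1-k := by omega
          rw [f2]
          have hpas : Nat.choose (2*N+1) (N-k) + Nat.choose (2*N+1) (N+1-k)
              = Nat.choose (2*(N+1)) (N+1+k) := by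
            have hp : Nat.choose (2*N+2) (N+1-k) = Nat.choose (2*N+1) (N-k) + Nat.choose (2*N+1) (N+1-k) := by
              have h4 : N+1-k = (N-k)+1 := by omega
              rw [h4, Nat.choose_succ_succ]
            have hsym : Nat.choose (2*N+2) (N+1-k) = Nat.choose (2*N+2) (N+1+k) := by
              have := Nat.choose_symm (n := 2*N+2) (k := N+1+k) (by omega)
              have h5 : 2*N+2-(N+1+k) = N+1-k := by omega
              rw [h5] at this
              exact this
            have h6 : 2*(N+1) = 2*N+2 := by ring
            rw [h6, ← hsym, hp]
          omega
      rw [key]; ring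
    · -- b = b'+1 case
      have hsum : ∀ d ∈ range (N+1),
          Nat.choose (2*(N-d)) (N-d+k) * Nat.choose (2*d+2) (d+(b+1)+1)
          = Nat.choose (2*(N-d)) (N-d+k) * Nat.choose (2*d) (d+b)
            + 2 * (Nat.choose (2*(N-d)) (N-d+k) * Nat.choose (2*d) (d+b+1))
            + Nat.choose (2*(N-d)) (N-d+k) * Nat.choose (2*d) (d+b+2) := by
        intro d _
        have h7 : d+(b+1)+1 = (d+b)+2 := by ring
        rw [h7, pascal2 (2*d) (d+b)]
        ring
      rw [sum_congr rfl hsum, sum_add_distrib, sum_add_distrib, ← mul_sum]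
      have ihb1 : ∑ d ∈ range (N+1), Nat.choose (2*(N-d)) (N-d+k) * Nat.choose (2*d) (d+b+1)
          = ∑ j ∈ range (N+1-(k+(b+1))), Nat.choose (2*N+1) j := ih k (b+1)
      have ihb2 : ∑ d ∈ range (N+1), Nat.choose (2*(N-d)) (N-d+k) * Nat.choose (2*d) (d+b+2)
          = ∑ j ∈ range (N+1-(k+(b+2))), Nat.choose (2*N+1) j := ih k (b+2)
      rw [ih k b, ihb1, ihb2]
      have hcz : Nat.choose 0 (b+1) = 0 := by simp
      rw [hcz, mul_zero, add_zero]
      have h2n : 2*(N+1)+1 = (2*N+1)+2 := by ring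
      rw [h2n, sum2two (2*N+1) (N+1+1-(k+(b+1)))]
      have e1 : N+1+1-(k+(b+1)) = N+1-(k+b) := by omega
      have e2 : N+1-(k+b)-1 = N+1-(k+(b+1)) := by omega
      have e3 : N+1-(k+b)-2 = N+1-(k+(b+2)) := by omega
      rw [e1, e2, e3]


/-- Vandermonde in range form. -/
lemma vand (p q c : ℕ) : ∑ u ∈ range (c+1), Nat.choose p u * Nat.choose q (c-u)
    = Nat.choose (p+q) c := by
  rw [Nat.add_choose_eq, Finset.Nat.sum_antidiagonal_eq_sum_range_succ_mk]

/-- L3: Vandermonde over i. -/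
lemma iSum (m t : ℕ) : ∑ i ∈ Icc 1 (m+1), Nat.choose m (i-1) * Nat.choose m (t+i)
    = Nat.choose (2*m) (m+t+1) := by
  have h2m : 2*m = m+m := by ring
  rw [h2m, ← vand m m (m+t+1)]
  -- truncate RHS range (m+t+2) to range (m+1)
  have htr : ∑ u ∈ range (m+t+2), Nat.choose m u * Nat.choose m (m+t+1-u)
      = ∑ u ∈ range (m+1), Nat.choose m u * Nat.choose m (m+t+1-u) := by
    symm
    apply sum_subset (by apply range_subset_range.2; omega)
    intro x hx hnx
    simp only [mem_range] at hx hnx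
    rw [Nat.choose_eq_zero_of_lt (by omega), zero_mul]
  rw [htr, ← sum_range_reflect (fun u => Nat.choose m u * Nat.choose m (m+t+1-u)) (m+1)]
  -- LHS reindex
  have hIcc : Icc 1 (m+1) = Ico 1 (m+2) := rfl
  rw [hIcc, sum_Ico_eq_sum_range]
  have hlen : m+2-1 = m+1 := rfl
  rw [hlen]
  apply sum_congr rfl
  intro a ha
  simp only [mem_range] at ha
  have h1 : 1+a-1 = a := by omega
  have h2 : m+1-1-a = m-a := by omega
  have h3 : m+t+1-(m-a) = t+(1+a) := by omega
  have h4 : Nat.choose m (m-a) = Nat.choose m a := Nat.choose_symm (by omega)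
  rw [h1, h2, h3, h4]

/-- L4: B1. -/
lemma B1 (m d : ℕ) : ∑ t ∈ range (d+2), Nat.choose m (t+1) * Nat.choose (2*d) (d+1-t)
    + Nat.choose (2*d) (d+2) = Nat.choose (m+2*d) (d+2) := by
  rw [← vand m (2*d) (d+2), sum_range_succ' (fun u => Nat.choose m u * Nat.choose (2*d) (d+2-u)) (d+2)]
  simp only [Nat.choose_zero_right, one_mul, Nat.sub_zero]
  congr 1
  apply sum_congr rfl
  intro t _
  congr 2
  omega

/-- L5: B2. -/
lemma B2 (m d : ℕ) : ∑ t ∈ range (d-2), Nat.choose m (t+1) * Nat.choose (2*d) (d-3-t)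
    + Nat.choose (2*d) (d-2) = Nat.choose (m+2*d) (d-2) := by
  rcases Nat.lt_or_ge d 3 with hd | hd
  · interval_cases d <;> simp
  · obtain ⟨e, rfl⟩ : ∃ e, d = e+3 := ⟨d-3, by omega⟩
    have h1 : e+3-2 = e+1 := by omega
    rw [h1, ← vand m (2*(e+3)) (e+1),
      sum_range_succ' (fun u => Nat.choose m u * Nat.choose (2*(e+3)) (e+1-u)) (e+1)]
    simp only [Nat.choose_zero_right, one_mul, Nat.sub_zero]
    congr 1
    apply sum_congr rfl
    intro t _
    have h2 : e+3-3-t = e-t := by omega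
    have h3 : e+1-(t+1) = e-t := by omega
    rw [h2, h3]

/-- L6: C1. -/
lemma C1 (m d : ℕ) : ∑ t ∈ range (d+2), Nat.choose (2*m) (m+1+t) * Nat.choose (2*d) (d+1-t)
    + ∑ v ∈ range (m+1), Nat.choose (2*m) v * Nat.choose (2*d) (m+d+2-v)
    = Nat.choose (2*m+2*d) (m+d+2) := by
  rw [← vand (2*m) (2*d) (m+d+2)]
  have hsplit : ∑ u ∈ range (m+d+3), Nat.choose (2*m) u * Nat.choose (2*d) (m+d+2-u)
      = ∑ u ∈ Ico 0 (m+1), Nat.choose (2*m) u * Nat.choose (2*d) (m+d+2-u)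
        + ∑ u ∈ Ico (m+1) (m+d+3), Nat.choose (2*m) u * Nat.choose (2*d) (m+d+2-u) := by
    rw [sum_Ico_consecutive _ (by omega) (by omega), ← range_eq_Ico]
  rw [hsplit, ← range_eq_Ico, sum_Ico_eq_sum_range]
  have hlen : m+d+3-(m+1) = d+2 := by omega
  rw [hlen, add_comm]
  congr 1
  apply sum_congr rfl
  intro t _
  have h2 : m+d+2-(m+1+t) = d+1-t := by omega
  rw [h2]

/-- L8: reflection of the tail sum. -/
lemma tailReflect (m d : ℕ) : ∑ v ∈ range (m+1), Nat.choose (2*m) v * Nat.choose (2*d) (m+d+2-v)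
    = ∑ k ∈ range (m+1), Nat.choose (2*m) (m+k) * Nat.choose (2*d) (d+2+k) := by
  rw [← sum_range_reflect (fun v => Nat.choose (2*m) v * Nat.choose (2*d) (m+d+2-v)) (m+1)]
  apply sum_congr rfl
  intro k hk
  simp only [mem_range] at hk
  have h1 : m+1-1-k = m-k := by omega
  have h2 : m+d+2-(m-k) = d+2+k := by omega
  have h3 : Nat.choose (2*m) (m-k) = Nat.choose (2*m) (m+k) := by
    have := Nat.choose_symm (n := 2*m) (k := m+k) (by omega)
    have h4 : 2*m-(m+k) = m-k := by omega
    rw [h4] at this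
    exact this
  rw [h1, h2, h3]


lemma C2'_d0 (m : ℕ) : ∑ t ∈ range (0-2), Nat.choose (2*m) (m+1+t) * Nat.choose (2*0) (0-3-t)
    + (Nat.choose (2*m) m * Nat.choose (2*0) (0+2)
       + Nat.choose (2*m) (m+1) * Nat.choose (2*0) (0+1)
       + ∑ k ∈ range (m-1), Nat.choose (2*m) (m+2+k) * Nat.choose (2*0) (0+k))
    = Nat.choose (2*m+2*0) (m+0+2) := by
  simp only [Nat.mul_zero, Nat.zero_sub, Nat.sub_self, range_zero, sum_empty, zero_add,
    Nat.add_zero, Nat.zero_add]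
  rw [show Nat.choose 0 2 = 0 from rfl, show Nat.choose 0 1 = 0 from rfl, mul_zero, mul_zero,
    zero_add, zero_add]
  rcases m with _ | _ | μ
  · decide
  · decide
  · rw [show (μ+2) - 1 = μ+1 from rfl,
      sum_range_succ' (fun x => Nat.choose (2*(μ+2)) (μ+2+2+x) * Nat.choose 0 x) μ]
    have hz : ∑ x ∈ range μ, Nat.choose (2*(μ+2)) (μ+2+2+(x+1)) * Nat.choose 0 (x+1) = 0 := by
      apply sum_eq_zero
      intro k _
      rw [Nat.choose_eq_zero_of_lt (show 0 < k+1 by omega), mul_zero]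
    rw [hz]
    simp

lemma C2'_d1 (m : ℕ) : ∑ t ∈ range (1-2), Nat.choose (2*m) (m+1+t) * Nat.choose (2*1) (1-3-t)
    + (Nat.choose (2*m) m * Nat.choose (2*1) (1+2)
       + Nat.choose (2*m) (m+1) * Nat.choose (2*1) (1+1)
       + ∑ k ∈ range (m-1), Nat.choose (2*m) (m+2+k) * Nat.choose (2*1) (1+k))
    = Nat.choose (2*m+2*1) (m+1+2) := by
  rw [show (1:ℕ)-2 = 0 from rfl, range_zero, sum_empty, zero_add,
    show Nat.choose (2*1) (1+2) = 0 from rfl, mul_zero, zero_add,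
    show Nat.choose (2*1) (1+1) = 1 from rfl, mul_one]
  rcases m with _ | _ | _ | μ
  · decide
  · decide
  · decide
  · rw [show (μ+3) - 1 = μ+2 from rfl,
      sum_range_succ' (fun k => Nat.choose (2*(μ+3)) (μ+3+2+k) * Nat.choose (2*1) (1+k)) (μ+1),
      sum_range_succ' (fun k => Nat.choose (2*(μ+3)) (μ+3+2+(k+1)) * Nat.choose (2*1) (1+(k+1))) μ]
    have hz : ∑ k ∈ range μ, Nat.choose (2*(μ+3)) (μ+3+2+(k+1+1)) * Nat.choose (2*1) (1+(k+1+1)) = 0 := by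
      apply sum_eq_zero
      intro k _
      rw [Nat.choose_eq_zero_of_lt (show 2*1 < 1+(k+1+1) by omega), mul_zero]
    rw [hz, show Nat.choose (2*1) (1+0) = 2 from rfl, show Nat.choose (2*1) (1+(0+1)) = 1 from rfl]
    have hp := pascal2 (2*(μ+3)) (μ+3+1)
    have h1 : 2*(μ+3)+2 = 2*(μ+3+1) := by ring
    have h2 : μ+3+1+2 = μ+3+3 := rfl
    rw [h1, h2] at hp
    have h3 : 2*(μ+3)+2*1 = 2*(μ+3+1) := by ring
    rw [h3]
    have h4 : μ+3+1+2 = μ+3+3 := rfl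
    rw [h4, hp]
    have h5 : μ+3+2+0 = μ+3+1+1 := by omega
    have h6 : μ+3+2+(0+1) = μ+3+1+2 := by omega
    rw [h5, h6]
    ring

/-- L7 -/
lemma C2 (m d : ℕ) : ∑ t ∈ range (d-2), Nat.choose (2*m) (m+1+t) * Nat.choose (2*d) (d-3-t)
    + (Nat.choose (2*m) m * Nat.choose (2*d) (d+2)
       + Nat.choose (2*m) (m+1) * Nat.choose (2*d) (d+1)
       + ∑ k ∈ range (m-1), Nat.choose (2*m) (m+2+k) * Nat.choose (2*d) (d+k))
    = Nat.choose (2*m+2*d) (m+d+2) := by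
  rcases d with _ | _ | e
  · exact C2'_d0 m
  · exact C2'_d1 m
  · set d := e+2 with hd
    have hsym : Nat.choose (2*m+2*d) (m+d+2) = Nat.choose (2*m+2*d) (m+e) := by
      have := Nat.choose_symm (n := 2*m+2*d) (k := m+d+2) (by omega)
      have h5 : 2*m+2*d-(m+d+2) = m+e := by omega
      rw [h5] at this
      exact this.symm
    rw [hsym, ← vand (2*m) (2*d) (m+e)]
    have hsplit : ∑ u ∈ range (m+e+1), Nat.choose (2*m) u * Nat.choose (2*d) (m+e-u)
        = ∑ u ∈ range (m+1), Nat.choose (2*m) u * Nat.choose (2*d) (m+e-u)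
          + ∑ u ∈ Ico (m+1) (m+e+1), Nat.choose (2*m) u * Nat.choose (2*d) (m+e-u) := by
      rw [range_eq_Ico, ← sum_Ico_consecutive _ (show 0 ≤ m+1 by omega) (show m+1 ≤ m+e+1 by omega),
        ← range_eq_Ico]
    rw [hsplit, sum_Ico_eq_sum_range]
    have hlen : m+e+1-(m+1) = e := by omega
    rw [hlen]
    have hPartB : ∑ t ∈ range e, Nat.choose (2*m) (m+1+t) * Nat.choose (2*d) (m+e-(m+1+t))
        = ∑ t ∈ range (d-2), Nat.choose (2*m) (m+1+t) * Nat.choose (2*d) (d-3-t) := by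
      have hd2 : d - 2 = e := by omega
      rw [hd2]
      apply sum_congr rfl
      intro t _
      congr 2
      omega
    have hPartA : ∑ u ∈ range (m+1), Nat.choose (2*m) u * Nat.choose (2*d) (m+e-u)
        = Nat.choose (2*m) m * Nat.choose (2*d) (d+2)
          + Nat.choose (2*m) (m+1) * Nat.choose (2*d) (d+1)
          + ∑ k ∈ range (m-1), Nat.choose (2*m) (m+2+k) * Nat.choose (2*d) (d+k) := by
      rw [← sum_range_reflect (fun u => Nat.choose (2*m) u * Nat.choose (2*d) (m+e-u)) (m+1)]
      have hrefl : ∀ k ∈ range (m+1),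
          Nat.choose (2*m) (m+1-1-k) * Nat.choose (2*d) (m+e-(m+1-1-k))
          = Nat.choose (2*m) (m+k) * Nat.choose (2*d) (e+k) := by
        intro k hk
        simp only [mem_range] at hk
        have h1 : m+1-1-k = m-k := by omega
        have h2 : m+e-(m-k) = e+k := by omega
        have h3 : Nat.choose (2*m) (m-k) = Nat.choose (2*m) (m+k) := by
          have := Nat.choose_symm (n := 2*m) (k := m+k) (by omega)
          have h4 : 2*m-(m+k) = m-k := by omega
          rw [h4] at this; exact this
        rw [h1, h2, h3]
      rw [sum_congr rfl hrefl]
      have hsy2 : Nat.choose (2*d) e = Nat.choose (2*d) (d+2) := by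
        have := Nat.choose_symm (n := 2*d) (k := d+2) (by omega)
        have h6 : 2*d-(d+2) = e := by omega
        rw [h6] at this; exact this
      have hsy1 : Nat.choose (2*d) (e+1) = Nat.choose (2*d) (d+1) := by
        have := Nat.choose_symm (n := 2*d) (k := d+1) (by omega)
        have h6 : 2*d-(d+1) = e+1 := by omega
        rw [h6] at this; exact this
      rcases m with _ | μ
      · simp [hsy2]
      · rw [sum_range_succ' (fun k => Nat.choose (2*(μ+1)) (μ+1+k) * Nat.choose (2*d) (e+k)) (μ+1),
          sum_range_succ' (fun k => Nat.choose (2*(μ+1)) (μ+1+(k+1)) * Nat.choose (2*d) (e+(k+1))) μ]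
        simp only [Nat.add_zero, hsy2]
        have heq : ∀ k ∈ range μ, Nat.choose (2*(μ+1)) (μ+1+(k+1+1)) * Nat.choose (2*d) (e+(k+1+1))
            = Nat.choose (2*(μ+1)) (μ+1+2+k) * Nat.choose (2*d) (d+k) := by
          intro k _
          congr 2
          · omega
          · omega
        rw [sum_congr rfl heq]
        have h8 : μ+1-1 = μ := rfl
        rw [h8, show e+(0+1) = e+1 by omega, hsy1]
        ring
    rw [hPartA, hPartB]
    ring


/-- Sum of reflected tails tail₂ over d. -/
lemma sumTail2 (N : ℕ) : ∑ d ∈ range (N+1), ∑ k ∈ range ((N-d)+1),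
      Nat.choose (2*(N-d)) ((N-d)+k) * Nat.choose (2*d) (d+2+k)
    = ∑ k ∈ range (N+1), ∑ j ∈ range (N+1-(2*k+2)), Nat.choose (2*N+1) j := by
  have hext : ∀ d ∈ range (N+1), ∑ k ∈ range ((N-d)+1),
      Nat.choose (2*(N-d)) ((N-d)+k) * Nat.choose (2*d) (d+2+k)
      = ∑ k ∈ range (N+1), Nat.choose (2*(N-d)) ((N-d)+k) * Nat.choose (2*d) (d+2+k) := by
    intro d hd
    simp only [mem_range] at hd
    apply sum_subset (range_subset_range.2 (by omega))
    intro k hk hnk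
    simp only [mem_range] at hk hnk
    rw [Nat.choose_eq_zero_of_lt (by omega), zero_mul]
  rw [sum_congr rfl hext, sum_comm]
  apply sum_congr rfl
  intro k _
  have h1 : ∀ d ∈ range (N+1),
      Nat.choose (2*(N-d)) ((N-d)+k) * Nat.choose (2*d) (d+2+k)
      = Nat.choose (2*(N-d)) ((N-d)+k) * Nat.choose (2*d) (d+(2+k)) := by
    intro d _
    congr 2
    omega
  rw [sum_congr rfl h1, conv_eq N k (2+k)]
  have : N+1-(k+(2+k)) = N+1-(2*k+2) := by omega
  rw [this]

/-- Sum of R over d. -/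
lemma sumR (N : ℕ) : ∑ d ∈ range (N+1),
      (Nat.choose (2*(N-d)) (N-d) * Nat.choose (2*d) (d+2)
       + Nat.choose (2*(N-d)) ((N-d)+1) * Nat.choose (2*d) (d+1)
       + ∑ k ∈ range ((N-d)-1), Nat.choose (2*(N-d)) ((N-d)+2+k) * Nat.choose (2*d) (d+k))
    = ∑ j ∈ range (N+1-2), Nat.choose (2*N+1) j + ∑ j ∈ range (N+1-2), Nat.choose (2*N+1) j
      + ∑ k ∈ range (N+1), ∑ j ∈ range (N+1-(2*k+2)), Nat.choose (2*N+1) j := by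
  rw [sum_add_distrib, sum_add_distrib]
  congr 1
  · congr 1
    · -- first: conv_eq N 0 2
      have h1 : ∀ d ∈ range (N+1),
          Nat.choose (2*(N-d)) (N-d) * Nat.choose (2*d) (d+2)
          = Nat.choose (2*(N-d)) ((N-d)+0) * Nat.choose (2*d) (d+2) := by
        intro d _; congr 2
      rw [sum_congr rfl h1, conv_eq N 0 2]
    · rw [conv_eq N 1 1]
  · -- third part
    have hext : ∀ d ∈ range (N+1), ∑ k ∈ range ((N-d)-1),
        Nat.choose (2*(N-d)) ((N-d)+2+k) * Nat.choose (2*d) (d+k)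
        = ∑ k ∈ range (N+1), Nat.choose (2*(N-d)) ((N-d)+(k+2)) * Nat.choose (2*d) (d+k) := by
      intro d hd
      simp only [mem_range] at hd
      have hcg : ∀ k ∈ range ((N-d)-1),
          Nat.choose (2*(N-d)) ((N-d)+2+k) * Nat.choose (2*d) (d+k)
          = Nat.choose (2*(N-d)) ((N-d)+(k+2)) * Nat.choose (2*d) (d+k) := by
        intro k _; congr 2; omega
      rw [sum_congr rfl hcg]
      apply sum_subset (range_subset_range.2 (by omega))
      intro k hk hnk
      simp only [mem_range] at hk hnk
      rw [Nat.choose_eq_zero_of_lt (by omega), zero_mul]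
    rw [sum_congr rfl hext, sum_comm]
    apply sum_congr rfl
    intro k _
    rw [conv_eq N (k+2) k]
    have : N+1-(k+2+k) = N+1-(2*k+2) := by omega
    rw [this]

/-- hockey 1 -/
lemma hockey1 (N : ℕ) (hN : 2 ≤ N) :
    ∑ d ∈ range N, Nat.choose (N+d) (d+2) + N = Nat.choose (2*N) (N-1) := by
  have h1 : ∀ d ∈ range N, Nat.choose (N+d) (d+2) = Nat.choose (N+d) (N-2) := by
    intro d _
    have := Nat.choose_symm (n := N+d) (k := d+2) (by omega)
    have h2 : N+d-(d+2) = N-2 := by omega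
    rw [h2] at this; exact this.symm
  rw [sum_congr rfl h1]
  have h3 : ∑ d ∈ range N, Nat.choose (N+d) (N-2) = ∑ M ∈ Ico N (2*N), Nat.choose M (N-2) := by
    rw [sum_Ico_eq_sum_range]
    apply sum_congr (by congr 1; omega)
    intro d _; rfl
  rw [h3]
  have hsplit : ∑ M ∈ Ico (N-2) (2*N), Nat.choose M (N-2)
      = ∑ M ∈ Ico (N-2) N, Nat.choose M (N-2) + ∑ M ∈ Ico N (2*N), Nat.choose M (N-2) := by
    rw [sum_Ico_consecutive _ (by omega) (by omega)]
  have hic : ∑ M ∈ Ico (N-2) (2*N), Nat.choose M (N-2) = Nat.choose (2*N) (N-1) := by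
    have : Ico (N-2) (2*N) = Icc (N-2) (2*N-1) := by
      rw [← Finset.Ico_add_one_right_eq_Icc]
      congr 1
      omega
    rw [this, Nat.sum_Icc_choose]
    congr 1 <;> omega
  have hsmall : ∑ M ∈ Ico (N-2) N, Nat.choose M (N-2) = N := by
    rw [sum_Ico_eq_sum_range, show N-(N-2) = 2 from by omega,
      sum_range_succ, sum_range_succ, sum_range_zero, Nat.add_zero, Nat.choose_self]
    have hh : Nat.choose (N-2+1) (N-2) = N-1 := by
      have h := Nat.choose_symm (n := N-2+1) (k := 1) (by omega)
      rw [show N-2+1-1 = N-2 from by omega, Nat.choose_one_right] at h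
      omega
    rw [hh]
    omega
  omega

/-- hockey 2 -/
lemma hockey2 (N : ℕ) (hN : 2 ≤ N) :
    ∑ d ∈ range N, (Nat.choose (N+d) (d-2) + Nat.choose (2*d) (d+2))
    = ∑ d ∈ range N, Nat.choose (2*d) (d-2) + Nat.choose (2*N) (N+3) := by
  obtain ⟨K, rfl⟩ : ∃ K, N = K+2 := ⟨N-2, by omega⟩
  rw [sum_range_succ' _ (K+1), sum_range_succ' _ K,
    sum_range_succ' (fun d => Nat.choose (2*d) (d-2)) (K+1),
    sum_range_succ' (fun d => Nat.choose (2*(d+1)) (d+1-2)) K]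
  have hc1 : ∀ d ∈ range K, Nat.choose (K+2+(d+1+1)) (d+1+1-2) + Nat.choose (2*(d+1+1)) (d+1+1+2)
      = Nat.choose (K+4+d) (K+4) + Nat.choose (2*d+4) d := by
    intro d _
    have e1 : d+1+1-2 = d := by omega
    have e2 : 2*(d+1+1) = 2*d+4 := by ring
    have e3 : d+1+1+2 = d+4 := by omega
    have e4 : K+2+(d+1+1) = K+4+d := by omega
    rw [e1, e2, e3, e4]
    congr 1
    · have := Nat.choose_symm (n := K+4+d) (k := K+4) (by omega)
      have h2 : K+4+d-(K+4) = d := by omega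
      rw [h2] at this; exact this
    · have := Nat.choose_symm (n := 2*d+4) (k := d+4) (by omega)
      have h2 : 2*d+4-(d+4) = d := by omega
      rw [h2] at this; exact this.symm
  rw [sum_congr rfl hc1, sum_add_distrib]
  have hc2 : ∀ d ∈ range K, Nat.choose (2*(d+1+1)) (d+1+1-2) = Nat.choose (2*d+4) d := by
    intro d _
    congr 1 <;> omega
  rw [sum_congr rfl hc2]
  have hhock : ∑ d ∈ range K, Nat.choose (K+4+d) (K+4) = Nat.choose (2*(K+2)) (K+2+3) := by
    have h3 : ∑ d ∈ range K, Nat.choose (K+4+d) (K+4) = ∑ M ∈ Ico (K+4) (K+4+K), Nat.choose M (K+4) := by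
      rw [sum_Ico_eq_sum_range]
      apply sum_congr (by congr 1; omega)
      intro d _; rfl
    rw [h3]
    rcases Nat.eq_zero_or_pos K with hK | hK
    · subst hK
      rw [Nat.choose_eq_zero_of_lt (by omega)]
      simp
    · have : Ico (K+4) (K+4+K) = Icc (K+4) (K+4+K-1) := by
        rw [← Finset.Ico_add_one_right_eq_Icc]
        congr 1
        omega
      rw [this, Nat.sum_Icc_choose]
      congr 1 <;> omega
  rw [hhock]
  norm_num
  omega


/-- Triangle reindexing. -/
lemma tri (n : ℕ) (hn : 2 ≤ n) (g : ℕ → ℕ → ℚ) :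
    ∑ i ∈ Icc 2 n, ∑ j ∈ Icc i n, g i j
    = ∑ d ∈ range (n-1), ∑ i ∈ Icc 2 (n-d), g i (i+d) := by
  rw [sum_sigma' (Icc 2 n) (fun i => Icc i n) (fun i j => g i j),
    sum_sigma' (range (n-1)) (fun d => Icc 2 (n-d)) (fun d i => g i (i+d))]
  apply sum_nbij' (fun x => ⟨x.2 - x.1, x.1⟩) (fun x => ⟨x.2, x.2 + x.1⟩)
  · intro a ha
    simp only [mem_sigma, mem_Icc, mem_range] at ha ⊢
    omega
  · intro a ha
    simp only [mem_sigma, mem_Icc, mem_range] at ha ⊢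
    omega
  · intro a ha
    obtain ⟨x, y⟩ := a
    simp only [mem_sigma, mem_Icc] at ha
    have h : x + (y - x) = y := by omega
    simp only []
    rw [h]
  · intro a ha
    obtain ⟨x, y⟩ := a
    simp only [mem_sigma, mem_Icc, mem_range] at ha
    have h : y + x - y = x := by omega
    simp only []
    rw [h]
  · intro a ha
    obtain ⟨x, y⟩ := a
    simp only [mem_sigma, mem_Icc] at ha
    have h : x + (y - x) = y := by omega
    simp only []
    rw [h]

/-- scalar identity -/
lemma scalar (n : ℕ) (hn : 3 ≤ n) :
    (2:ℚ)/(n:ℚ) * (Nat.choose (2*n) (n-2) : ℚ)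
    = (Nat.choose (2*n-2) (n-2) : ℚ) - (Nat.choose (2*n-2) (n+2) : ℚ) := by
  rcases Nat.lt_or_ge n 4 with h4 | h4
  · interval_cases n
    norm_num [Nat.choose]
  · obtain ⟨k, rfl⟩ : ∃ k, n = k+4 := ⟨n-4, by omega⟩
    have e1 : 2*(k+4) = 2*k+8 := by ring
    have e2 : k+4-2 = k+2 := by omega
    have e3 : 2*k+8-2 = 2*k+6 := by omega
    have e4 : k+4+2 = k+6 := by omega
    rw [e1, e2, e3, e4]
    have c1 : (Nat.choose (2*k+8) (k+2) : ℚ)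
        = (Nat.factorial (2*k+8) : ℚ) / (Nat.factorial (k+2) * Nat.factorial (k+6)) := by
      rw [Nat.cast_choose ℚ (by omega), show 2*k+8-(k+2) = k+6 from by omega]
    have c2 : (Nat.choose (2*k+6) (k+2) : ℚ)
        = (Nat.factorial (2*k+6) : ℚ) / (Nat.factorial (k+2) * Nat.factorial (k+4)) := by
      rw [Nat.cast_choose ℚ (by omega), show 2*k+6-(k+2) = k+4 from by omega]
    have c3 : (Nat.choose (2*k+6) (k+6) : ℚ)
        = (Nat.factorial (2*k+6) : ℚ) / (Nat.factorial (k+6) * Nat.factorial k) := by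
      rw [Nat.cast_choose ℚ (by omega), show 2*k+6-(k+6) = k from by omega, mul_comm]
    rw [c1, c2, c3]
    have f1 : (Nat.factorial (2*k+8) : ℚ) = (2*k+8) * (2*k+7) * Nat.factorial (2*k+6) := by
      rw [show 2*k+8 = (2*k+7)+1 from by ring, Nat.factorial_succ,
        show 2*k+7 = (2*k+6)+1 from by ring, Nat.factorial_succ]
      push_cast
      ring
    have f2 : (Nat.factorial (k+6) : ℚ) = (k+6) * (k+5) * Nat.factorial (k+4) := by
      rw [show k+6 = (k+5)+1 from by ring, Nat.factorial_succ,
        show k+5 = (k+4)+1 from by ring, Nat.factorial_succ]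
      push_cast
      ring
    have f3 : (Nat.factorial (k+4) : ℚ) = (k+4) * (k+3) * Nat.factorial (k+2) := by
      rw [show k+4 = (k+3)+1 from by ring, Nat.factorial_succ,
        show k+3 = (k+2)+1 from by ring, Nat.factorial_succ]
      push_cast
      ring
    have f4 : (Nat.factorial (k+2) : ℚ) = (k+2) * (k+1) * Nat.factorial k := by
      rw [show k+2 = (k+1)+1 from by ring, Nat.factorial_succ, Nat.factorial_succ]
      push_cast
      ring
    have hk0 : (Nat.factorial k : ℚ) ≠ 0 := Nat.cast_ne_zero.mpr (Nat.factorial_ne_zero k)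
    have h26 : (Nat.factorial (2*k+6) : ℚ) ≠ 0 := Nat.cast_ne_zero.mpr (Nat.factorial_ne_zero _)
    rw [f1, f2, f3, f4]
    have n1 : ((k:ℚ)+1) ≠ 0 := by positivity
    have n2 : ((k:ℚ)+2) ≠ 0 := by positivity
    have n3 : ((k:ℚ)+3) ≠ 0 := by positivity
    have n4 : ((k:ℚ)+4) ≠ 0 := by positivity
    have n5 : ((k:ℚ)+5) ≠ 0 := by positivity
    have n6 : ((k:ℚ)+6) ≠ 0 := by positivity
    push_cast
    field_simp
    ring


/-- i-sum in ℚ -/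
lemma iSumQ (m t : ℕ) : ∑ i ∈ Icc 2 (m+1), (Nat.choose m (i-1) : ℚ) * (Nat.choose m (t+i) : ℚ)
    = (Nat.choose (2*m) (m+t+1) : ℚ) - (Nat.choose m (t+1) : ℚ) := by
  have h := iSum m t
  have hsplit : ∑ i ∈ Icc 1 (m+1), Nat.choose m (i-1) * Nat.choose m (t+i)
      = Nat.choose m 0 * Nat.choose m (t+1)
        + ∑ i ∈ Icc 2 (m+1), Nat.choose m (i-1) * Nat.choose m (t+i) := by
    have h1 : Icc 1 (m+1) = Ico 1 (m+2) := by rw [← Finset.Ico_add_one_right_eq_Icc]; rfl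
    have h2 : Icc 2 (m+1) = Ico 2 (m+2) := by rw [← Finset.Ico_add_one_right_eq_Icc]; rfl
    rw [h1, h2, sum_eq_sum_Ico_succ_bot (by omega)]
  rw [hsplit] at h
  have hq : (Nat.choose m 0 * Nat.choose m (t+1)
      + ∑ i ∈ Icc 2 (m+1), Nat.choose m (i-1) * Nat.choose m (t+i) : ℚ)
      = (Nat.choose (2*m) (m+t+1) : ℚ) := by exact_mod_cast congrArg (fun x : ℕ => (x:ℚ)) h
  push_cast at hq
  simp only [Nat.choose_zero_right, Nat.cast_one, one_mul] at hq
  linarith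

/-- halfway peel -/
lemma halfway (N : ℕ) (hN : 1 ≤ N) :
    ∑ j ∈ range (N+1-2), Nat.choose (2*N+1) j + Nat.choose (2*N+1) (N-1) + Nat.choose (2*N+1) N
    = 4^N := by
  have h := Nat.sum_range_choose_halfway N
  obtain ⟨M, hM⟩ : ∃ M, N = M+1 := ⟨N-1, by omega⟩
  subst hM
  rw [show M+1+1 = M+2 from rfl] at h
  rw [sum_range_succ, sum_range_succ] at h
  have e1 : M+1+1-2 = M := by omega
  have e2 : M+1-1 = M := by omega
  rw [e1, e2]
  omega

/-- d = N term coincidence -/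
lemma dNterm (N : ℕ) :
    (Nat.choose (2*(N-N)) (N-N) * Nat.choose (2*N) (N+2)
     + Nat.choose (2*(N-N)) ((N-N)+1) * Nat.choose (2*N) (N+1)
     + ∑ k ∈ range ((N-N)-1), Nat.choose (2*(N-N)) ((N-N)+2+k) * Nat.choose (2*N) (N+k))
    = ∑ k ∈ range ((N-N)+1), Nat.choose (2*(N-N)) ((N-N)+k) * Nat.choose (2*N) (N+2+k) := by
  simp [Nat.sub_self]

/-- grand ℕ identity -/
lemma grand (N : ℕ) (hN : 2 ≤ N) :
    ∑ d ∈ range N, (Nat.choose (2*(N-d)) (N-d) * Nat.choose (2*d) (d+2)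
       + Nat.choose (2*(N-d)) ((N-d)+1) * Nat.choose (2*d) (d+1)
       + ∑ k ∈ range ((N-d)-1), Nat.choose (2*(N-d)) ((N-d)+2+k) * Nat.choose (2*d) (d+k))
      + ∑ d ∈ range N, Nat.choose (2*d) (d+2)
      + ∑ d ∈ range N, Nat.choose (N+d) (d-2)
      + Nat.choose (2*N) (N-1)
    = ∑ d ∈ range N, (∑ v ∈ range ((N-d)+1),
          Nat.choose (2*(N-d)) v * Nat.choose (2*d) ((N-d)+d+2-v))
      + ∑ d ∈ range N, Nat.choose (N+d) (d+2)
      + ∑ d ∈ range N, Nat.choose (2*d) (d-2)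
      + 2 * ∑ j ∈ range (N+1-2), Nat.choose (2*N+1) j
      + N + Nat.choose (2*N) (N+3) := by
  -- convert tail v-form to reflected form
  have hrefl : ∀ d ∈ range N, ∑ v ∈ range ((N-d)+1),
        Nat.choose (2*(N-d)) v * Nat.choose (2*d) ((N-d)+d+2-v)
      = ∑ k ∈ range ((N-d)+1), Nat.choose (2*(N-d)) ((N-d)+k) * Nat.choose (2*d) (d+2+k) := by
    intro d _
    exact tailReflect (N-d) d
  rw [sum_congr rfl hrefl]
  -- relation (1): ΣR over range N = ΣT over range N + 2f
  have h1 : ∑ d ∈ range N, (Nat.choose (2*(N-d)) (N-d) * Nat.choose (2*d) (d+2)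
       + Nat.choose (2*(N-d)) ((N-d)+1) * Nat.choose (2*d) (d+1)
       + ∑ k ∈ range ((N-d)-1), Nat.choose (2*(N-d)) ((N-d)+2+k) * Nat.choose (2*d) (d+k))
      = ∑ d ∈ range N, (∑ k ∈ range ((N-d)+1),
          Nat.choose (2*(N-d)) ((N-d)+k) * Nat.choose (2*d) (d+2+k))
        + 2 * ∑ j ∈ range (N+1-2), Nat.choose (2*N+1) j := by
    have hA := sumR N
    have hB := sumTail2 N
    rw [sum_range_succ] at hA hB
    rw [dNterm N] at hA
    omega
  have h2 := hockey1 N hN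
  have h3 := hockey2 N hN
  rw [sum_add_distrib] at h3
  omega

/-- C1 with index form m+t+1 -/
lemma C1w (m d : ℕ) : ∑ t ∈ range (d+2), Nat.choose (2*m) (m+t+1) * Nat.choose (2*d) (d+1-t)
    + ∑ v ∈ range (m+1), Nat.choose (2*m) v * Nat.choose (2*d) (m+d+2-v)
    = Nat.choose (2*m+2*d) (m+d+2) := by
  rw [← C1 m d]
  congr 1
  apply sum_congr rfl
  intro t _
  congr 2
  omega

/-- C2 with index form m+t+1 -/
lemma C2w (m d : ℕ) : ∑ t ∈ range (d-2), Nat.choose (2*m) (m+t+1) * Nat.choose (2*d) (d-3-t)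
    + (Nat.choose (2*m) m * Nat.choose (2*d) (d+2)
       + Nat.choose (2*m) (m+1) * Nat.choose (2*d) (d+1)
       + ∑ k ∈ range (m-1), Nat.choose (2*m) (m+2+k) * Nat.choose (2*d) (d+k))
    = Nat.choose (2*m+2*d) (m+d+2) := by
  rw [← C2 m d]
  congr 1
  apply sum_congr rfl
  intro t _
  congr 2
  omega

/-- per-d evaluation in ℚ -/
lemma innerEval (m d : ℕ) :
    (∑ t ∈ range (d+2), ((Nat.choose (2*m) (m+t+1) : ℚ) - (Nat.choose m (t+1) : ℚ))
        * (Nat.choose (2*d) (d+1-t) : ℚ))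
    - (∑ t ∈ range (d-2), ((Nat.choose (2*m) (m+t+1) : ℚ) - (Nat.choose m (t+1) : ℚ))
        * (Nat.choose (2*d) (d-3-t) : ℚ))
    = ((Nat.choose (2*m) m * Nat.choose (2*d) (d+2)
        + Nat.choose (2*m) (m+1) * Nat.choose (2*d) (d+1)
        + ∑ k ∈ range (m-1), Nat.choose (2*m) (m+2+k) * Nat.choose (2*d) (d+k) : ℕ) : ℚ)
      - ((∑ v ∈ range (m+1), Nat.choose (2*m) v * Nat.choose (2*d) (m+d+2-v) : ℕ) : ℚ)
      - (Nat.choose (m+2*d) (d+2) : ℚ) + (Nat.choose (2*d) (d+2) : ℚ)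
      + (Nat.choose (m+2*d) (d-2) : ℚ) - (Nat.choose (2*d) (d-2) : ℚ) := by
  have e1 : ∑ t ∈ range (d+2), ((Nat.choose (2*m) (m+t+1) : ℚ) - (Nat.choose m (t+1) : ℚ))
        * (Nat.choose (2*d) (d+1-t) : ℚ)
      = ((∑ t ∈ range (d+2), Nat.choose (2*m) (m+t+1) * Nat.choose (2*d) (d+1-t) : ℕ) : ℚ)
        - ((∑ t ∈ range (d+2), Nat.choose m (t+1) * Nat.choose (2*d) (d+1-t) : ℕ) : ℚ) := by
    push_cast
    rw [← sum_sub_distrib]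
    apply sum_congr rfl
    intro t _
    ring
  have e2 : ∑ t ∈ range (d-2), ((Nat.choose (2*m) (m+t+1) : ℚ) - (Nat.choose m (t+1) : ℚ))
        * (Nat.choose (2*d) (d-3-t) : ℚ)
      = ((∑ t ∈ range (d-2), Nat.choose (2*m) (m+t+1) * Nat.choose (2*d) (d-3-t) : ℕ) : ℚ)
        - ((∑ t ∈ range (d-2), Nat.choose m (t+1) * Nat.choose (2*d) (d-3-t) : ℕ) : ℚ) := by
    push_cast
    rw [← sum_sub_distrib]
    apply sum_congr rfl
    intro t _
    ring
  rw [e1, e2]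
  have hB1 := congrArg (fun x : ℕ => (x:ℚ)) (B1 m d)
  have hB2 := congrArg (fun x : ℕ => (x:ℚ)) (B2 m d)
  have hC1 := congrArg (fun x : ℕ => (x:ℚ)) (C1w m d)
  have hC2 := congrArg (fun x : ℕ => (x:ℚ)) (C2w m d)
  push_cast at hB1 hB2 hC1 hC2
  push_cast
  linarith

/-- The paper's Lemma (lem13, formula (72)): evaluation of the sum `T₃`. -/
theorem lemma_T3 (n : ℕ) (hn : 3 ≤ n) :
    ∑ i ∈ Finset.Icc 2 n, ∑ j ∈ Finset.Icc i n,
        ((∑ t ∈ Finset.range (j - i + 2),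
            (Nat.choose (i - 1 + n - j) (i - 1) : ℚ) * (Nat.choose (i - 1 + n - j) (t + i) : ℚ) *
              (Nat.choose (2 * (j - i)) (j - i + 1 - t) : ℚ)) -
          (∑ t ∈ Finset.range (j - i - 2),
            (Nat.choose (i - 1 + n - j) (i - 1) : ℚ) * (Nat.choose (i - 1 + n - j) (t + i) : ℚ) *
              (Nat.choose (2 * (j - i)) (j - i - 3 - t) : ℚ))) =
      2 ^ (2 * n - 1) + ((n : ℚ) - 1) - (2 / (n : ℚ)) * (Nat.choose (2 * n) (n - 2) : ℚ) -
        (Nat.choose (2 * n) (n + 1) : ℚ) - (Nat.choose (2 * n + 1) n : ℚ) +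
        (Nat.choose (2 * n) n : ℚ) := by
  obtain ⟨N, rfl⟩ : ∃ N, n = N + 1 := ⟨n - 1, by omega⟩
  have hN2 : 2 ≤ N := by omega
  rw [tri (N+1) (by omega)]
  rw [show N+1-1 = N from rfl]
  -- Step 1: per-d reduction
  have step1 : ∀ d ∈ range N, ∑ i ∈ Icc 2 (N+1-d),
      ((∑ t ∈ range ((i+d) - i + 2),
          (Nat.choose (i - 1 + (N+1) - (i+d)) (i - 1) : ℚ) * (Nat.choose (i - 1 + (N+1) - (i+d)) (t + i) : ℚ) *
            (Nat.choose (2 * ((i+d) - i)) ((i+d) - i + 1 - t) : ℚ)) -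
        (∑ t ∈ range ((i+d) - i - 2),
          (Nat.choose (i - 1 + (N+1) - (i+d)) (i - 1) : ℚ) * (Nat.choose (i - 1 + (N+1) - (i+d)) (t + i) : ℚ) *
            (Nat.choose (2 * ((i+d) - i)) ((i+d) - i - 3 - t) : ℚ)))
      = ((Nat.choose (2*(N-d)) (N-d) * Nat.choose (2*d) (d+2)
          + Nat.choose (2*(N-d)) ((N-d)+1) * Nat.choose (2*d) (d+1)
          + ∑ k ∈ range ((N-d)-1), Nat.choose (2*(N-d)) ((N-d)+2+k) * Nat.choose (2*d) (d+k) : ℕ) : ℚ)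
        - ((∑ v ∈ range ((N-d)+1), Nat.choose (2*(N-d)) v * Nat.choose (2*d) ((N-d)+d+2-v) : ℕ) : ℚ)
        - (Nat.choose (N+d) (d+2) : ℚ) + (Nat.choose (2*d) (d+2) : ℚ)
        + (Nat.choose (N+d) (d-2) : ℚ) - (Nat.choose (2*d) (d-2) : ℚ) := by
    intro d hd
    simp only [mem_range] at hd
    have hsummand : ∀ i ∈ Icc 2 (N+1-d),
        ((∑ t ∈ range ((i+d) - i + 2),
            (Nat.choose (i - 1 + (N+1) - (i+d)) (i - 1) : ℚ) * (Nat.choose (i - 1 + (N+1) - (i+d)) (t + i) : ℚ) *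
              (Nat.choose (2 * ((i+d) - i)) ((i+d) - i + 1 - t) : ℚ)) -
          (∑ t ∈ range ((i+d) - i - 2),
            (Nat.choose (i - 1 + (N+1) - (i+d)) (i - 1) : ℚ) * (Nat.choose (i - 1 + (N+1) - (i+d)) (t + i) : ℚ) *
              (Nat.choose (2 * ((i+d) - i)) ((i+d) - i - 3 - t) : ℚ)))
        = ((∑ t ∈ range (d + 2),
            (Nat.choose (N-d) (i-1) : ℚ) * (Nat.choose (N-d) (t+i) : ℚ) * (Nat.choose (2*d) (d+1-t) : ℚ))
          - (∑ t ∈ range (d - 2),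
            (Nat.choose (N-d) (i-1) : ℚ) * (Nat.choose (N-d) (t+i) : ℚ) * (Nat.choose (2*d) (d-3-t) : ℚ))) := by
      intro i hi
      simp only [mem_Icc] at hi
      have g1 : (i+d) - i = d := by omega
      have g2 : i - 1 + (N+1) - (i+d) = N-d := by omega
      rw [g1, g2]
    rw [sum_congr rfl hsummand, sum_sub_distrib,
      sum_comm (s := Icc 2 (N+1-d)) (t := range (d+2)),
      sum_comm (s := Icc 2 (N+1-d)) (t := range (d-2))]
    have hm1 : N + 1 - d = (N-d) + 1 := by omega
    have hS1 : ∑ t ∈ range (d+2), ∑ i ∈ Icc 2 (N+1-d),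
        (Nat.choose (N-d) (i-1) : ℚ) * (Nat.choose (N-d) (t+i) : ℚ) * (Nat.choose (2*d) (d+1-t) : ℚ)
        = ∑ t ∈ range (d+2), ((Nat.choose (2*(N-d)) ((N-d)+t+1) : ℚ) - (Nat.choose (N-d) (t+1) : ℚ))
            * (Nat.choose (2*d) (d+1-t) : ℚ) := by
      apply sum_congr rfl
      intro t _
      rw [← sum_mul, hm1, iSumQ (N-d) t]
    have hS2 : ∑ t ∈ range (d-2), ∑ i ∈ Icc 2 (N+1-d),
        (Nat.choose (N-d) (i-1) : ℚ) * (Nat.choose (N-d) (t+i) : ℚ) * (Nat.choose (2*d) (d-3-t) : ℚ)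
        = ∑ t ∈ range (d-2), ((Nat.choose (2*(N-d)) ((N-d)+t+1) : ℚ) - (Nat.choose (N-d) (t+1) : ℚ))
            * (Nat.choose (2*d) (d-3-t) : ℚ) := by
      apply sum_congr rfl
      intro t _
      rw [← sum_mul, hm1, iSumQ (N-d) t]
    rw [hS1, hS2, innerEval (N-d) d]
    rw [show (N-d) + 2*d = N + d from by omega]
  rw [sum_congr rfl step1]
  -- Step 2: split the d-sums
  rw [sum_sub_distrib, sum_add_distrib, sum_add_distrib, sum_sub_distrib, sum_sub_distrib]
  -- Step 3: grand identity and final bookkeeping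
  have hgrand := congrArg (fun x : ℕ => (x:ℚ)) (grand N hN2)
  push_cast at hgrand
  have hhalf := congrArg (fun x : ℕ => (x:ℚ)) (halfway N (by omega))
  push_cast at hhalf
  have hscalar := scalar (N+1) (by omega)
  rw [show 2*(N+1)-2 = 2*N from by omega, show N+1-2 = N-1 from by omega,
    show N+1+2 = N+3 from by omega] at hscalar
  push_cast at hscalar
  have p1 : Nat.choose (2*(N+1)+1) (N+1) = Nat.choose (2*(N+1)) N + Nat.choose (2*(N+1)) (N+1) :=
    Nat.choose_succ_succ (2*(N+1)) N
  have p2 : Nat.choose (2*(N+1)) (N+1+1) = Nat.choose (2*(N+1)) N := by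
    have h := Nat.choose_symm (n := 2*(N+1)) (k := N+1+1) (by omega)
    rw [show 2*(N+1)-(N+1+1) = N from by omega] at h
    exact h.symm
  have p3 : Nat.choose (2*(N+1)) N = Nat.choose (2*N+1) (N-1) + Nat.choose (2*N+1) N := by
    have h := Nat.choose_succ_succ (2*N+1) (N-1)
    simp only [Nat.succ_eq_add_one] at h
    rw [show N-1+1 = N from by omega, show 2*N+1+1 = 2*(N+1) from by omega] at h
    omega
  have q1 := congrArg (fun x : ℕ => (x:ℚ)) p1
  have q2 := congrArg (fun x : ℕ => (x:ℚ)) p2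
  have q3 := congrArg (fun x : ℕ => (x:ℚ)) p3
  push_cast at q1 q2 q3
  have hpow : (2:ℚ)^(2*(N+1)-1) = 2 * (4:ℚ)^N := by
    rw [show (4:ℚ) = 2^2 from by norm_num, ← pow_mul, show 2*(N+1)-1 = 2*N+1 from by omega]
    ring
  rw [hpow]
  push_cast
  linarith
end

section
/- Let m, a, b be positive integers with m ≥ a+b and a ≥ b. Then the following identity holds in ℚ: Σ_{s=a}^{a+b} C(m,s) · C(s, a+b−s) · (1/(s−b+1)) · C(2s−a−b, s−a) = (1/(m+1)) · C(m+1, a+1) · C(m+1, b). -/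
open Finset

private lemma lmm3_aux (c j k d : ℕ) :
    (Nat.choose (c+2*j+2*k+d) (c+j+k+j) : ℚ) * (Nat.choose (c+j+k+j) k : ℚ) *
      (1/((c:ℚ)+j+1)) * (Nat.choose (c+2*j) j : ℚ)
    = (Nat.choose (c+2*j+2*k+d) (c+j+k) : ℚ) / ((c:ℚ)+j+k+1) *
      (Nat.choose (j+k+d) j : ℚ) * (Nat.choose (c+j+k+1) k : ℚ) := by
  have e1 : (c+2*j+2*k+d) - (c+j+k+j) = k+d := by omega
  have e2 : (c+j+k+j) - k = c+2*j := by omega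
  have e3 : (c+2*j) - j = c+j := by omega
  have e4 : (c+2*j+2*k+d) - (c+j+k) = j+k+d := by omega
  have e5 : (j+k+d) - j = k+d := by omega
  have e6 : (c+j+k+1) - k = c+j+1 := by omega
  rw [Nat.cast_choose ℚ (by omega : c+j+k+j ≤ c+2*j+2*k+d),
      Nat.cast_choose ℚ (by omega : k ≤ c+j+k+j),
      Nat.cast_choose ℚ (by omega : j ≤ c+2*j),
      Nat.cast_choose ℚ (by omega : c+j+k ≤ c+2*j+2*k+d),
      Nat.cast_choose ℚ (by omega : j ≤ j+k+d),
      Nat.cast_choose ℚ (by omega : k ≤ c+j+k+1),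
      e1, e2, e3, e4, e5, e6]
  have f1 : ((c+j+1).factorial : ℚ) = ((c:ℚ)+j+1) * ((c+j).factorial : ℚ) := by
    rw [show c+j+1 = (c+j)+1 from rfl, Nat.factorial_succ]; push_cast; ring
  have f2 : ((c+j+k+1).factorial : ℚ) = ((c:ℚ)+j+k+1) * ((c+j+k).factorial : ℚ) := by
    rw [show c+j+k+1 = (c+j+k)+1 from rfl, Nat.factorial_succ]; push_cast; ring
  rw [f1, f2]
  have h1 : ((c:ℚ)+j+1) ≠ 0 := by positivity
  have h2 : ((c:ℚ)+j+k+1) ≠ 0 := by positivity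
  field_simp

private lemma lmm3_aux' (c j k d M S T B A : ℕ) (x : ℚ)
    (hM : M = c+2*j+2*k+d) (hS : S = c+j+k+j) (hT : T = c+2*j) (hB : B = j+k+d)
    (hA : A = c+j+k) (hx : x = (c:ℚ)+j+1) :
    (Nat.choose M S : ℚ) * (Nat.choose S k : ℚ) * (1/x) * (Nat.choose T j : ℚ)
    = (Nat.choose M A : ℚ) / ((A:ℚ)+1) *
      ((Nat.choose B j : ℚ) * (Nat.choose (A+1) k : ℚ)) := by
  subst hM hS hT hB hA hx
  push_cast
  linear_combination lmm3_aux c j k d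

/-- The paper's Lemma (Lmm3, formula (12)). -/
theorem lemma_Lmm3 (m a b : ℕ) (ha : 0 < a) (hb : 0 < b) (hm : a + b ≤ m) (hab : b ≤ a) :
    ∑ s ∈ Finset.Icc a (a + b),
        (Nat.choose m s : ℚ) * (Nat.choose s (a + b - s) : ℚ) * (1 / ((s : ℚ) - b + 1)) *
          (Nat.choose (2 * s - a - b) (s - a) : ℚ) =
      (1 / ((m : ℚ) + 1)) * (Nat.choose (m + 1) (a + 1) : ℚ) * (Nat.choose (m + 1) b : ℚ) := by
  obtain ⟨c, rfl⟩ : ∃ c, a = b + c := ⟨a - b, by omega⟩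
  obtain ⟨d, rfl⟩ : ∃ d, m = (b+c) + b + d := ⟨m - ((b+c)+b), by omega⟩
  set a := b + c with hadef
  set m := a + b + d with hmdef
  have hre : ∑ s ∈ Finset.Icc a (a + b),
        (Nat.choose m s : ℚ) * (Nat.choose s (a + b - s) : ℚ) * (1 / ((s : ℚ) - b + 1)) *
          (Nat.choose (2 * s - a - b) (s - a) : ℚ)
      = ∑ j ∈ Finset.range (b+1),
        (Nat.choose m (a+j) : ℚ) * (Nat.choose (a+j) (b - j) : ℚ) * (1 / (((a:ℚ)+j) - b + 1)) *
          (Nat.choose (c + 2*j) j : ℚ) := by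
    apply Finset.sum_nbij' (fun s => s - a) (fun j => a + j)
    · intro s hs; simp only [Finset.mem_Icc] at hs; simp; omega
    · intro j hj; simp only [Finset.mem_range] at hj; simp [Finset.mem_Icc]; omega
    · intro s hs; simp only [Finset.mem_Icc] at hs; omega
    · intro j hj; simp
    · intro s hs
      simp only [Finset.mem_Icc] at hs
      obtain ⟨j, rfl⟩ : ∃ j, s = a + j := ⟨s - a, by omega⟩
      rw [Nat.add_sub_cancel_left,
        show a + b - (a + j) = b - j from by omega,
        show 2 * (a + j) - a - b = c + 2*j from by omega]
      push_cast
      ring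
  rw [hre]
  have hpt : ∀ j ∈ Finset.range (b+1),
      (Nat.choose m (a+j) : ℚ) * (Nat.choose (a+j) (b - j) : ℚ) * (1 / (((a:ℚ)+j) - b + 1)) *
          (Nat.choose (c + 2*j) j : ℚ)
      = (Nat.choose m a : ℚ) / ((a:ℚ)+1) *
          ((Nat.choose (b+d) j : ℚ) * (Nat.choose (a+1) (b-j) : ℚ)) := by
    intro j hj
    simp only [Finset.mem_range] at hj
    obtain ⟨k, rfl⟩ : ∃ k, b = j + k := ⟨b - j, by omega⟩
    rw [Nat.add_sub_cancel_left]
    exact lmm3_aux' c j k d _ _ _ _ _ _ (by omega) (by omega) (by omega) (by omega)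
      (by omega) (by simp only [hadef]; push_cast; ring)
  rw [Finset.sum_congr rfl hpt, ← Finset.mul_sum]
  have hv : ∑ j ∈ Finset.range (b+1), (Nat.choose (b+d) j : ℚ) * (Nat.choose (a+1) (b-j) : ℚ)
      = (Nat.choose (m+1) b : ℚ) := by
    have hvd := Nat.add_choose_eq (b+d) (a+1) b
    rw [Finset.Nat.sum_antidiagonal_eq_sum_range_succ_mk] at hvd
    rw [show m + 1 = (b+d) + (a+1) from by omega]
    push_cast [hvd]
    ring
  rw [hv]
  have hc : (Nat.choose m a : ℚ) / ((a:ℚ)+1)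
      = (1 / ((m : ℚ) + 1)) * (Nat.choose (m + 1) (a + 1) : ℚ) := by
    have h0 := Nat.add_one_mul_choose_eq m a
    have h1 : ((m+1) * Nat.choose m a : ℚ) = (Nat.choose (m+1) (a+1) * (a+1) : ℚ) := by
      exact_mod_cast congrArg (Nat.cast : ℕ → ℚ) h0
    have hm1 : ((m:ℚ)+1) ≠ 0 := by positivity
    have ha1 : ((a:ℚ)+1) ≠ 0 := by positivity
    field_simp
    push_cast at h1 ⊢
    linarith [h1]
  rw [hc]
end
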